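/- Let E be a subset of a metric space and I a compact subset of ℝ with upper box-counting dimension D(I). Then HD(E × I) ≤ HD(E) + D(I), where the product carries the max (or equivalent product) metric. In particular, if I is a nondegenerate compact interval, HD(E × I) ≤ HD(E) + 1. -/

import Mathlib

/-- Covering number: the least cardinality of a finite set of centers of `δ`-balls
covering `s ⊆ ℝ` (and `⊤` if no finite cover exists). -/
noncomputable def coveringNumber (δ : ℝ) (s : Set ℝ) : ℕ∞ :=
  sInf ((fun t : Finset ℝ => (t.card : ℕ∞)) ''
    {t : Finset ℝ | s ⊆ ⋃ x ∈ t, Metric.ball x δ})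

/-- Upper box-counting (Minkowski) dimension of a subset of `ℝ`:
`limsup_{δ → 0⁺} log N(δ) / log (1/δ)`. -/
noncomputable def upperBoxDim (s : Set ℝ) : ℝ :=
  Filter.limsup (fun δ : ℝ => Real.log ((coveringNumber δ s).toNat : ℝ) / Real.log (1 / δ))
    (nhdsWithin 0 (Set.Ioi 0))

open Set Metric Filter


lemma coveringNumber_le {δ : ℝ} {s : Set ℝ} {t : Finset ℝ}
    (h : s ⊆ ⋃ x ∈ t, Metric.ball x δ) : coveringNumber δ s ≤ t.card :=
  sInf_le ⟨t, h, rfl⟩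

/-- grid cover -/
lemma coveringNumber_le_grid {s : Set ℝ} {R δ : ℝ} (hδ : 0 < δ)
    (hsub : s ⊆ Set.Icc (-R) R) :
    coveringNumber δ s ≤ ((⌈2 * R / δ⌉₊ + 1 : ℕ) : ℕ∞) := by
  set n := ⌈2 * R / δ⌉₊ with hn
  set t : Finset ℝ := (Finset.range (n + 1)).image (fun k : ℕ => -R + δ * (k : ℝ)) with ht
  have hcov : s ⊆ ⋃ x ∈ t, Metric.ball x δ := by
    intro y hy
    obtain ⟨h1, h2⟩ := hsub hy
    have hy0 : 0 ≤ y + R := by linarith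
    set k := ⌊(y + R) / δ⌋₊ with hk
    have hkn : k ≤ n := by
      calc k ≤ ⌈(y + R) / δ⌉₊ := Nat.floor_le_ceil _
        _ ≤ n := Nat.ceil_le_ceil (by
            apply (div_le_div_iff_of_pos_right hδ).2
            linarith)
    have hfl : (k : ℝ) * δ ≤ y + R := by
      rw [mul_comm]
      calc δ * k ≤ δ * ((y + R)/δ) := by
            exact mul_le_mul_of_nonneg_left (Nat.floor_le (by positivity)) hδ.le
        _ = y + R := by field_simp
    have hfl2 : y + R < (k + 1 : ℝ) * δ := by
      have := Nat.lt_floor_add_one ((y + R)/δ)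
      calc y + R = ((y+R)/δ) * δ := by field_simp
        _ < (k+1) * δ := by
            apply mul_lt_mul_of_pos_right _ hδ
            exact_mod_cast this
    have hmem : (-R + δ * (k : ℝ)) ∈ t := by
      exact Finset.mem_image.2 ⟨k, Finset.mem_range.2 (Nat.lt_succ_of_le hkn), rfl⟩
    refine Set.mem_biUnion hmem ?_
    rw [Metric.mem_ball, Real.dist_eq, abs_lt]
    constructor <;> nlinarith
  calc coveringNumber δ s ≤ t.card := coveringNumber_le hcov
    _ ≤ ((n + 1 : ℕ) : ℕ∞) := by
        have := (Finset.card_image_le (s := Finset.range (n+1))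
          (f := fun k : ℕ => -R + δ * (k : ℝ))).trans (le_of_eq (Finset.card_range (n+1)))
        exact_mod_cast this

lemma coveringNumber_ne_top {s : Set ℝ} {δ : ℝ} (hδ : 0 < δ) (hb : Bornology.IsBounded s) :
    coveringNumber δ s ≠ ⊤ := by
  obtain ⟨R, hR⟩ := hb.subset_closedBall 0
  have h : s ⊆ Set.Icc (-R) R := by rwa [Real.closedBall_eq_Icc, zero_sub, zero_add] at hR
  refine ne_top_of_le_ne_top ?_ (coveringNumber_le_grid hδ h)
  exact_mod_cast ENat.coe_ne_top _

lemma one_le_coveringNumber {s : Set ℝ} {δ : ℝ} (hs : s.Nonempty) :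
    1 ≤ coveringNumber δ s := by
  refine le_sInf ?_
  rintro a ⟨t, ht, rfl⟩
  obtain ⟨y, hy⟩ := hs
  have h2 := ht hy
  simp only [Set.mem_iUnion] at h2
  obtain ⟨x, hx, -⟩ := h2
  have h3 : 0 < t.card := Finset.card_pos.2 ⟨x, hx⟩
  show (1 : ℕ∞) ≤ t.card
  exact_mod_cast h3

lemma exists_cover_card_le {s : Set ℝ} {δ : ℝ} (h : coveringNumber δ s ≠ ⊤) :
    ∃ t : Finset ℝ, (s ⊆ ⋃ x ∈ t, Metric.ball x δ) ∧
      t.card ≤ (coveringNumber δ s).toNat := by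
  set N := (coveringNumber δ s).toNat with hN
  have heq : coveringNumber δ s = (N : ℕ∞) := (ENat.coe_toNat h).symm
  have hlt : sInf ((fun t : Finset ℝ => (t.card : ℕ∞)) ''
      {t : Finset ℝ | s ⊆ ⋃ x ∈ t, Metric.ball x δ}) < ((N + 1 : ℕ) : ℕ∞) := by
    change coveringNumber δ s < ((N + 1 : ℕ) : ℕ∞)
    rw [heq]
    exact_mod_cast Nat.lt_succ_self N
  rw [sInf_lt_iff] at hlt
  obtain ⟨a, ⟨t, ht, rfl⟩, hlt⟩ := hlt
  have : (t.card : ℕ∞) < ((N + 1 : ℕ) : ℕ∞) := hlt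
  exact ⟨t, ht, Nat.lt_succ_iff.1 (by exact_mod_cast this)⟩


/-- The quotient function is eventually bounded above, for bounded `s`. -/
lemma aux_bdd {s : Set ℝ} (hb : Bornology.IsBounded s) :
    ∃ R : ℝ, 1 ≤ R ∧ s ⊆ Set.Icc (-R) R ∧
      ∀ δ : ℝ, 0 < δ → δ ≤ 1/2 →
        Real.log ((coveringNumber δ s).toNat : ℝ) ≤ Real.log (2*R+2) + Real.log (1/δ) := by
  obtain ⟨R₀, hR₀⟩ := hb.subset_closedBall 0
  refine ⟨max R₀ 1, le_max_right _ _, ?_, ?_⟩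
  · rw [Real.closedBall_eq_Icc, zero_sub, zero_add] at hR₀
    exact hR₀.trans (Set.Icc_subset_Icc (by simp) (le_max_left _ _))
  · intro δ hδ hδ2
    set R := max R₀ 1 with hR
    have hR1 : (1:ℝ) ≤ R := le_max_right _ _
    have hsub : s ⊆ Set.Icc (-R) R := by
      rw [Real.closedBall_eq_Icc, zero_sub, zero_add] at hR₀
      exact hR₀.trans (Set.Icc_subset_Icc (neg_le_neg (le_max_left _ _)) (le_max_left _ _))
    have hle := coveringNumber_le_grid hδ hsub
    have hnt : coveringNumber δ s ≠ ⊤ := coveringNumber_ne_top hδ hb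
    have hNle : ((coveringNumber δ s).toNat : ℝ) ≤ (2*R+2)/δ := by
      have h1 : (coveringNumber δ s).toNat ≤ ⌈2 * R / δ⌉₊ + 1 := by
        have := ENat.toNat_le_toNat hle (by exact_mod_cast ENat.coe_ne_top _)
        rwa [ENat.toNat_coe] at this
      have h2 : (⌈2 * R / δ⌉₊ : ℝ) ≤ 2*R/δ + 1 := by
        have := Nat.ceil_lt_add_one (a := 2*R/δ) (by positivity)
        linarith
      have h3 : ((coveringNumber δ s).toNat : ℝ) ≤ 2*R/δ + 2 := by
        calc ((coveringNumber δ s).toNat : ℝ) ≤ ((⌈2 * R / δ⌉₊ + 1 : ℕ) : ℝ) := by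
              exact_mod_cast h1
          _ = (⌈2 * R / δ⌉₊ : ℝ) + 1 := by push_cast; ring
          _ ≤ 2*R/δ + 2 := by linarith
      have h4 : 2*R/δ + 2 ≤ (2*R+2)/δ := by
        rw [add_div]
        have : (2:ℝ) ≤ 2/δ := by
          rw [le_div_iff₀ hδ]; linarith
        linarith
      linarith
    calc Real.log ((coveringNumber δ s).toNat : ℝ) ≤ Real.log ((2*R+2)/δ) := by
          rcases Nat.eq_zero_or_pos (coveringNumber δ s).toNat with h | h
          · rw [h]; simp only [Nat.cast_zero, Real.log_zero]
            apply Real.log_nonneg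
            rw [le_div_iff₀ hδ]; nlinarith
          · exact Real.log_le_log (by exact_mod_cast h) hNle
      _ = Real.log (2*R+2) + Real.log (1/δ) := by
          rw [div_eq_mul_one_div, Real.log_mul (by positivity) (by positivity)]

lemma coveringNumber_empty (δ : ℝ) : coveringNumber δ (∅ : Set ℝ) = 0 := by
  refine le_antisymm ?_ zero_le
  have : coveringNumber δ (∅ : Set ℝ) ≤ (∅ : Finset ℝ).card :=
    coveringNumber_le (by simp)
  simpa using this

lemma upperBoxDim_le_one {s : Set ℝ} (hb : Bornology.IsBounded s) : upperBoxDim s ≤ 1 := by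
  rcases s.eq_empty_or_nonempty with rfl | hne
  · have : upperBoxDim (∅ : Set ℝ) = Filter.limsup (fun _ : ℝ => (0:ℝ)) (nhdsWithin 0 (Set.Ioi 0)) := by
      unfold upperBoxDim
      congr 1
      funext δ
      rw [coveringNumber_empty]
      simp
    rw [this, Filter.limsup_const]
    norm_num
  obtain ⟨R, hR1, -, hbound⟩ := aux_bdd hb
  set C := Real.log (2*R+2) with hC
  have hC0 : 0 ≤ C := Real.log_nonneg (by linarith)
  set f := fun δ : ℝ => Real.log ((coveringNumber δ s).toNat : ℝ) / Real.log (1 / δ) with hf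
  have hf0 : ∀ δ : ℝ, 0 < δ → δ < 1/2 → 0 ≤ f δ := by
    intro δ hδ hδ2
    apply div_nonneg
    · apply Real.log_nonneg
      have h1 : (1:ℕ∞) ≤ coveringNumber δ s := one_le_coveringNumber hne
      have h2 : coveringNumber δ s ≠ ⊤ := coveringNumber_ne_top hδ hb
      have : 1 ≤ (coveringNumber δ s).toNat := by
        rw [← ENat.coe_toNat h2] at h1; exact_mod_cast h1
      exact_mod_cast this
    · apply Real.log_nonneg
      rw [le_div_iff₀ hδ]; linarith
  have hcob : Filter.IsCoboundedUnder (· ≤ ·) (nhdsWithin 0 (Set.Ioi 0)) f := by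
    apply Filter.isCoboundedUnder_le_of_eventually_le _ (x := 0)
    filter_upwards [Ioo_mem_nhdsGT_of_mem
      (show (0:ℝ) ∈ Set.Ico (0:ℝ) (1/2) from ⟨le_refl _, by norm_num⟩)] with δ hδ
    exact hf0 δ hδ.1 hδ.2
  apply le_of_forall_pos_le_add
  intro ε hε
  apply Filter.limsup_le_of_le hcob
  set δ₁ := min (1/2 : ℝ) (Real.exp (-(C/ε))) with hδ₁
  have hδ₁0 : 0 < δ₁ := lt_min (by norm_num) (Real.exp_pos _)
  filter_upwards [Ioo_mem_nhdsGT_of_mem (Set.mem_Ico.2 ⟨le_refl (0:ℝ), hδ₁0⟩)] with δ hδ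
  obtain ⟨hδ0, hδlt⟩ := hδ
  have hδhalf : δ ≤ 1/2 := le_of_lt (lt_of_lt_of_le hδlt (min_le_left _ _))
  have hL : 0 < Real.log (1/δ) := Real.log_pos (by rw [lt_div_iff₀ hδ0]; linarith)
  have hlogN := hbound δ hδ0 hδhalf
  have hCL : C / Real.log (1/δ) ≤ ε := by
    have h1 : C / ε < Real.log (1/δ) := by
      have h2 : Real.log δ < -(C/ε) := by
        calc Real.log δ < Real.log δ₁ := Real.log_lt_log hδ0 hδlt
          _ ≤ Real.log (Real.exp (-(C/ε))) :=
              Real.log_le_log hδ₁0 (min_le_right _ _)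
          _ = -(C/ε) := Real.log_exp _
      rw [one_div, Real.log_inv]
      linarith
    rw [div_le_iff₀ hL]
    rw [div_lt_iff₀ hε] at h1
    nlinarith
  calc f δ ≤ (C + Real.log (1/δ)) / Real.log (1/δ) :=
        (div_le_div_iff_of_pos_right hL).2 hlogN
    _ = C / Real.log (1/δ) + 1 := by field_simp
    _ ≤ 1 + ε := by linarith

lemma eventually_cov_le {s : Set ℝ} (hb : Bornology.IsBounded s) (hne : s.Nonempty) {d : ℝ}
    (hd : upperBoxDim s < d) :
    ∀ᶠ δ in nhdsWithin (0:ℝ) (Set.Ioi 0), ((coveringNumber δ s).toNat : ℝ) ≤ δ ^ (-d) := by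
  obtain ⟨R, hR1, -, hbound⟩ := aux_bdd hb
  set C := Real.log (2*R+2) with hC
  have hC0 : 0 ≤ C := Real.log_nonneg (by linarith)
  set f := fun δ : ℝ => Real.log ((coveringNumber δ s).toNat : ℝ) / Real.log (1 / δ) with hf
  have hbdd : Filter.IsBoundedUnder (· ≤ ·) (nhdsWithin (0:ℝ) (Set.Ioi 0)) f := by
    apply Filter.isBoundedUnder_of_eventually_le (a := C / Real.log 2 + 1)
    filter_upwards [Ioo_mem_nhdsGT_of_mem
      (show (0:ℝ) ∈ Set.Ico (0:ℝ) (1/2) from ⟨le_refl _, by norm_num⟩)] with δ hδ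
    obtain ⟨hδ0, hδ2⟩ := hδ
    have hδhalf : δ ≤ 1/2 := hδ2.le
    have hL2 : Real.log 2 ≤ Real.log (1/δ) := by
      have h2 : (2:ℝ) ≤ 1/δ := by rw [le_div_iff₀ hδ0]; linarith
      exact Real.log_le_log (by norm_num) h2
    have hL : 0 < Real.log (1/δ) := lt_of_lt_of_le (Real.log_pos (by norm_num)) hL2
    have hlogN := hbound δ hδ0 hδhalf
    calc f δ ≤ (C + Real.log (1/δ)) / Real.log (1/δ) :=
          (div_le_div_iff_of_pos_right hL).2 hlogN
      _ = C / Real.log (1/δ) + 1 := by field_simp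
      _ ≤ C / Real.log 2 + 1 := by
          have := div_le_div_of_nonneg_left hC0 (Real.log_pos (by norm_num)) hL2
          linarith
  have hev : ∀ᶠ δ in nhdsWithin (0:ℝ) (Set.Ioi 0), f δ < d :=
    Filter.eventually_lt_of_limsup_lt hd hbdd
  filter_upwards [hev, Ioo_mem_nhdsGT_of_mem
    (show (0:ℝ) ∈ Set.Ico (0:ℝ) (1/2) from ⟨le_refl _, by norm_num⟩)] with δ hfδ hδ
  obtain ⟨hδ0, hδ2⟩ := hδ
  have hL : 0 < Real.log (1/δ) := Real.log_pos (by rw [lt_div_iff₀ hδ0]; linarith)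
  have hN1 : 1 ≤ (coveringNumber δ s).toNat := by
    have h1 : (1:ℕ∞) ≤ coveringNumber δ s := one_le_coveringNumber hne
    have h2 : coveringNumber δ s ≠ ⊤ := coveringNumber_ne_top hδ0 hb
    rw [← ENat.coe_toNat h2] at h1; exact_mod_cast h1
  have hNpos : (0:ℝ) < ((coveringNumber δ s).toNat : ℝ) := by exact_mod_cast hN1
  have hlogN : Real.log ((coveringNumber δ s).toNat : ℝ) < d * Real.log (1/δ) := by
    rw [hf, div_lt_iff₀ hL] at hfδ
    exact hfδ
  calc ((coveringNumber δ s).toNat : ℝ)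
      = Real.exp (Real.log ((coveringNumber δ s).toNat : ℝ)) := (Real.exp_log hNpos).symm
    _ ≤ Real.exp (d * Real.log (1/δ)) := Real.exp_le_exp.2 hlogN.le
    _ = δ ^ (-d) := by
        rw [Real.rpow_def_of_pos hδ0]
        congr 1
        rw [one_div, Real.log_inv]
        ring

open MeasureTheory ENNReal

lemma diam_prod_le' {X : Type*} [MetricSpace X] (A : Set X) (B : Set ℝ) :
    EMetric.diam (A ×ˢ B) ≤ max (EMetric.diam A) (EMetric.diam B) := by
  apply EMetric.diam_le
  rintro ⟨x1, y1⟩ ⟨hx1, hy1⟩ ⟨x2, y2⟩ ⟨hx2, hy2⟩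
  rw [Prod.edist_eq]
  exact max_le_max (EMetric.edist_le_diam_of_mem hx1 hx2) (EMetric.edist_le_diam_of_mem hy1 hy2)

lemma key {X : Type*} [MetricSpace X] [MeasurableSpace X] [BorelSpace X]
    (E : Set X) (I : Set ℝ) (hI : IsCompact I) (hne : I.Nonempty) {s d : ℝ}
    (hs : 0 < s) (hd0 : 0 < d) (hsE : dimH E < ENNReal.ofReal s)
    (hdI : upperBoxDim I < d) : μH[s + d] (E ×ˢ I) = 0 := by
  classical
  have hsd0 : 0 ≤ s + d := by linarith
  -- Hausdorff measure of E vanishes at exponent s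
  have hμE : μH[s] E = 0 := by
    have h1 : dimH E < (s.toNNReal : ℝ≥0∞) := hsE
    have h2 := hausdorffMeasure_of_dimH_lt h1
    rwa [Real.coe_toNNReal s hs.le] at h2
  -- eventual covering-number bound
  obtain ⟨δ₀, hδ₀, hNbd⟩ : ∃ δ₀ > 0, ∀ δ, 0 < δ → δ < δ₀ →
      ((coveringNumber δ I).toNat : ℝ) ≤ δ ^ (-d) := by
    have h := eventually_cov_le hI.isBounded hne hdI
    rw [eventually_nhdsWithin_iff, Metric.eventually_nhds_iff] at h
    obtain ⟨δ₀, hδ₀, hh⟩ := h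
    refine ⟨δ₀, hδ₀, fun δ h1 h2 => ?_⟩
    exact hh (by rw [Real.dist_eq, sub_zero, abs_of_pos h1]; exact h2) h1
  refine le_antisymm ?_ zero_le
  refine ENNReal.le_of_forall_pos_le_add fun ε hε _ => ?_
  rw [zero_add, Measure.hausdorffMeasure_apply]
  refine iSup₂_le fun r hr => ?_
  -- choose a real scale below r and δ₀
  obtain ⟨r₁, hr₁, hr₁le⟩ : ∃ r₁ : ℝ, 0 < r₁ ∧ ENNReal.ofReal r₁ ≤ r := by
    rcases eq_or_ne r ⊤ with rfl | hrt
    · exact ⟨1, one_pos, le_top⟩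
    · exact ⟨r.toReal, ENNReal.toReal_pos hr.ne' hrt, (ENNReal.ofReal_toReal hrt).le⟩
  set r₀ : ℝ := min r₁ δ₀ with hr₀def
  have hr₀ : 0 < r₀ := lt_min hr₁ hδ₀
  set e : ℝ := min ((r₀/2) ^ s) ((ε : ℝ) / (2 * (2:ℝ) ^ (s + d))) with hedef
  have he : 0 < e := lt_min (Real.rpow_pos_of_pos (by linarith) _) (by positivity)
  -- extract a cover of E
  have hμE' : (⨅ (U : ℕ → Set X) (_ : E ⊆ ⋃ n, U n)
      (_ : ∀ n, EMetric.diam (U n) ≤ ENNReal.ofReal (r₀/2)),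
        ∑' n, ⨆ _ : (U n).Nonempty, EMetric.diam (U n) ^ s) < ENNReal.ofReal e := by
    rw [Measure.hausdorffMeasure_apply] at hμE
    have h1 := le_iSup₂ (f := fun (r' : ℝ≥0∞) (_ : 0 < r') =>
      ⨅ (U : ℕ → Set X) (_ : E ⊆ ⋃ n, U n) (_ : ∀ n, EMetric.diam (U n) ≤ r'),
        ∑' n, ⨆ _ : (U n).Nonempty, EMetric.diam (U n) ^ s)
      (ENNReal.ofReal (r₀/2)) (by simp [ENNReal.ofReal_pos]; linarith)
    replace h1 := h1.trans_eq hμE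
    exact lt_of_le_of_lt h1 (by simp [ENNReal.ofReal_pos, he])
  simp only [iInf_lt_iff] at hμE'
  obtain ⟨U, hUcov, hUdiam, hUsum⟩ := hμE'
  -- radii
  set D : ℕ → ℝ := fun n => (EMetric.diam (U n)).toReal with hDdef
  set τ : ℕ → ℝ := fun n => (e * (1/2) ^ (n+1)) ^ (1/s) with hτdef
  set ρ : ℕ → ℝ := fun n => max (D n) (τ n) with hρdef
  have hDle : ∀ n, D n ≤ r₀/2 := fun n =>
    ENNReal.toReal_le_of_le_ofReal (by linarith) (hUdiam n)
  have hτpos : ∀ n, 0 < τ n := fun n => Real.rpow_pos_of_pos (by positivity) _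
  have hτle : ∀ n, τ n ≤ r₀/2 := by
    intro n
    have h1 : e * (1/2) ^ (n+1) ≤ (r₀/2) ^ s := by
      calc e * (1/2) ^ (n+1) ≤ e * 1 := by
            apply mul_le_mul_of_nonneg_left _ he.le
            exact pow_le_one₀ (by norm_num) (by norm_num)
        _ = e := mul_one e
        _ ≤ (r₀/2) ^ s := min_le_left _ _
    calc τ n ≤ ((r₀/2) ^ s) ^ (1/s) :=
          Real.rpow_le_rpow (by positivity) h1 (by positivity)
      _ = r₀/2 := by
          rw [← Real.rpow_mul (by positivity), mul_one_div_cancel hs.ne', Real.rpow_one]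
  have hρpos : ∀ n, 0 < ρ n := fun n => lt_of_lt_of_le (hτpos n) (le_max_right _ _)
  have hρle : ∀ n, ρ n ≤ r₀/2 := fun n => max_le (hDle n) (hτle n)
  have hρδ : ∀ n, ρ n < δ₀ := by
    intro n
    have h1 : r₀ ≤ δ₀ := min_le_right _ _
    have := hρle n
    linarith
  have hdiamU_ne : ∀ n, EMetric.diam (U n) ≠ ⊤ := fun n =>
    ne_top_of_le_ne_top ENNReal.ofReal_ne_top (hUdiam n)
  have hdiamU_eq : ∀ n, EMetric.diam (U n) = ENNReal.ofReal (D n) := fun n =>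
    (ENNReal.ofReal_toReal (hdiamU_ne n)).symm
  have hNn : ∀ n, ((coveringNumber (ρ n) I).toNat : ℝ) ≤ (ρ n) ^ (-d) :=
    fun n => hNbd _ (hρpos n) (hρδ n)
  have hex : ∀ n, ∃ tt : Finset ℝ, (I ⊆ ⋃ x ∈ tt, Metric.ball x (ρ n)) ∧
      tt.card ≤ (coveringNumber (ρ n) I).toNat :=
    fun n => exists_cover_card_le (coveringNumber_ne_top (hρpos n) hI.isBounded)
  choose t ht htc using hex
  set V : ℕ × ℕ → Set (X × ℝ) := fun p =>
    if p.2 < (t p.1).toList.length then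
      (U p.1) ×ˢ Metric.ball ((t p.1).toList.getD p.2 0) (ρ p.1) else ∅ with hVdef
  have hVdiam2 : ∀ p : ℕ × ℕ, EMetric.diam (V p) ≤ ENNReal.ofReal (2 * ρ p.1) := by
    intro p
    by_cases h : p.2 < (t p.1).toList.length
    · simp only [hVdef]
      simp only [if_pos h]
      refine le_trans (diam_prod_le' _ _) (max_le ?_ ?_)
      · rw [hdiamU_eq]
        apply ENNReal.ofReal_le_ofReal
        have h1 := le_max_left (D p.1) (τ p.1)
        have h2 := hρpos p.1
        simp only [hρdef] at h2 ⊢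
        linarith
      · calc EMetric.diam (Metric.ball ((t p.1).toList.getD p.2 0) (ρ p.1))
            ≤ 2 * ENNReal.ofReal (ρ p.1) := by
              rw [← Metric.emetric_ball]; exact EMetric.diam_ball
          _ = ENNReal.ofReal (2 * ρ p.1) := by
              rw [ENNReal.ofReal_mul (by norm_num : (0:ℝ) ≤ 2), ENNReal.ofReal_ofNat]
    · simp only [hVdef, if_neg h, EMetric.diam_empty]
      exact EMetric.diam_empty.le.trans (zero_le : (0:ℝ≥0∞) ≤ _)
  have hVr : ∀ p : ℕ × ℕ, EMetric.diam (V p) ≤ r := by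
    intro p
    refine le_trans (hVdiam2 p) (le_trans (ENNReal.ofReal_le_ofReal (q := r₁) ?_) hr₁le)
    have h1 := hρle p.1
    have h2 : r₀ ≤ r₁ := min_le_left _ _
    linarith
  have hVcov : E ×ˢ I ⊆ ⋃ p : ℕ × ℕ, V p := by
    rintro ⟨x, y⟩ ⟨hx, hy⟩
    obtain ⟨n, hn⟩ := Set.mem_iUnion.1 (hUcov hx)
    have h1 := ht n hy
    simp only [Set.mem_iUnion] at h1
    obtain ⟨c, hc, hyc⟩ := h1
    obtain ⟨k, hk, hck⟩ := List.mem_iff_getElem.1 (Finset.mem_toList.2 hc)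
    refine Set.mem_iUnion.2 ⟨(n, k), ?_⟩
    simp only [hVdef]
    simp only [if_pos hk]
    refine ⟨hn, ?_⟩
    rw [List.getD_eq_getElem _ _ hk, hck]
    exact hyc
  set e' : ℕ ≃ ℕ × ℕ := (Denumerable.eqv (ℕ × ℕ)).symm with he'def
  set F : ℕ × ℕ → ℝ≥0∞ := fun p =>
    if (U p.1).Nonempty ∧ p.2 < (t p.1).toList.length then
      ENNReal.ofReal (2 * ρ p.1) ^ (s + d) else 0 with hFdef
  have hGn : ∀ n, (∑' k, F (n, k)) ≤ ENNReal.ofReal ((2:ℝ) ^ (s+d)) *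
      ((⨆ _ : (U n).Nonempty, EMetric.diam (U n) ^ s) +
        ENNReal.ofReal (e * (1/2) ^ (n+1))) := by
    intro n
    by_cases hU : (U n).Nonempty
    · have hsum : (∑' k, F (n, k)) =
          ((t n).toList.length : ℝ≥0∞) * ENNReal.ofReal (2 * ρ n) ^ (s + d) := by
        rw [tsum_eq_sum (s := Finset.range (t n).toList.length)
          (by intro k hk; simp only [hFdef]
              simp only [Finset.mem_range, not_lt] at hk
              exact if_neg (fun hcon => absurd hcon.2 (not_lt.2 hk)))]
        rw [Finset.sum_congr rfl (fun k hk => ?_), Finset.sum_const, Finset.card_range,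
          nsmul_eq_mul]
        simp only [hFdef]
        exact if_pos ⟨hU, Finset.mem_range.1 hk⟩
      rw [hsum]
      have hρ0 : ENNReal.ofReal (ρ n) ≠ 0 := by
        simp [ENNReal.ofReal_pos, hρpos n]
      have hlen : ((t n).toList.length : ℝ≥0∞) ≤ ENNReal.ofReal (ρ n) ^ (-d) := by
        rw [ENNReal.ofReal_rpow_of_pos (hρpos n)]
        rw [← ENNReal.ofReal_natCast]
        apply ENNReal.ofReal_le_ofReal
        calc ((t n).toList.length : ℝ) = ((t n).card : ℝ) := by
              rw [Finset.length_toList]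
          _ ≤ ((coveringNumber (ρ n) I).toNat : ℝ) := by exact_mod_cast htc n
          _ ≤ (ρ n) ^ (-d) := hNn n
      calc ((t n).toList.length : ℝ≥0∞) * ENNReal.ofReal (2 * ρ n) ^ (s + d)
          ≤ ENNReal.ofReal (ρ n) ^ (-d) * ENNReal.ofReal (2 * ρ n) ^ (s + d) :=
            mul_le_mul_left hlen _
        _ = ENNReal.ofReal ((2:ℝ)^(s+d)) *
            (ENNReal.ofReal (ρ n) ^ (-d) * ENNReal.ofReal (ρ n) ^ (s + d)) := by
            rw [ENNReal.ofReal_mul (by norm_num : (0:ℝ) ≤ 2),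
              ENNReal.mul_rpow_of_nonneg _ _ hsd0,
              ← ENNReal.ofReal_rpow_of_pos (by norm_num : (0:ℝ) < 2)]
            ring
        _ = ENNReal.ofReal ((2:ℝ)^(s+d)) * ENNReal.ofReal (ρ n) ^ s := by
            rw [← ENNReal.rpow_add _ _ hρ0 ENNReal.ofReal_ne_top]
            norm_num
        _ ≤ ENNReal.ofReal ((2:ℝ)^(s+d)) *
            ((⨆ _ : (U n).Nonempty, EMetric.diam (U n) ^ s) +
              ENNReal.ofReal (e * (1/2) ^ (n+1))) := by
            apply mul_le_mul_right
            rcases max_choice (D n) (τ n) with hmax | hmax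
            · have hρD : ρ n = D n := hmax
              rw [hρD, ← hdiamU_eq, iSup_pos hU]
              exact self_le_add_right _ _
            · have hρτ : ρ n = τ n := hmax
              rw [hρτ, ENNReal.ofReal_rpow_of_pos (hτpos n)]
              have hτs : (τ n) ^ s = e * (1/2) ^ (n+1) := by
                rw [hτdef]
                rw [← Real.rpow_mul (by positivity), one_div_mul_cancel hs.ne',
                  Real.rpow_one]
              rw [hτs]
              exact self_le_add_left _ _
    · have hzero : ∀ k, F (n, k) = 0 := by
        intro k; simp only [hFdef]
        exact if_neg (fun hcon => hU hcon.1)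
      simp only [hzero, tsum_zero]
      exact zero_le
  have hgeo : (∑' n : ℕ, ENNReal.ofReal (e * (1/2) ^ (n+1))) = ENNReal.ofReal e := by
    have h1 : ∀ n : ℕ, ENNReal.ofReal (e * (1/2) ^ (n+1)) =
        ENNReal.ofReal e * (ENNReal.ofReal (1/2)) ^ (n+1) := fun n => by
      rw [ENNReal.ofReal_mul he.le, ENNReal.ofReal_pow (by norm_num)]
    simp_rw [h1]
    rw [ENNReal.tsum_mul_left]
    have h2 : ENNReal.ofReal (1/2 : ℝ) = 2⁻¹ := by
      rw [one_div, ENNReal.ofReal_inv_of_pos (by norm_num), ENNReal.ofReal_ofNat]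
    rw [h2]
    have h3 : (∑' n : ℕ, (2⁻¹ : ℝ≥0∞) ^ (n+1)) = 1 := by
      simp_rw [pow_succ']
      rw [ENNReal.tsum_mul_left, ENNReal.tsum_geometric, ENNReal.one_sub_inv_two,
        inv_inv]
      exact ENNReal.inv_mul_cancel two_ne_zero ENNReal.ofNat_ne_top
    rw [h3, mul_one]
  -- main chain
  calc (⨅ (W : ℕ → Set (X × ℝ)) (_ : E ×ˢ I ⊆ ⋃ n, W n)
        (_ : ∀ n, EMetric.diam (W n) ≤ r),
          ∑' n, ⨆ _ : (W n).Nonempty, EMetric.diam (W n) ^ (s + d))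
      ≤ ∑' n, ⨆ _ : ((V (e' n)).Nonempty), EMetric.diam (V (e' n)) ^ (s + d) := by
        refine iInf_le_of_le (fun n => V (e' n)) ?_
        have hcov' : E ×ˢ I ⊆ ⋃ n, V (e' n) := by
          rwa [Function.Surjective.iUnion_comp e'.surjective V]
        exact iInf_le_of_le hcov' (iInf_le_of_le (fun n => hVr (e' n)) le_rfl)
    _ = ∑' p : ℕ × ℕ, ⨆ _ : (V p).Nonempty, EMetric.diam (V p) ^ (s + d) :=
        Equiv.tsum_eq e' (fun p => ⨆ _ : (V p).Nonempty, EMetric.diam (V p) ^ (s + d))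
    _ ≤ ∑' p : ℕ × ℕ, F p := by
        refine ENNReal.tsum_le_tsum fun p => ?_
        by_cases hp : (U p.1).Nonempty ∧ p.2 < (t p.1).toList.length
        · simp only [hFdef]
          rw [if_pos hp]
          exact iSup_le fun _ => ENNReal.rpow_le_rpow (hVdiam2 p) hsd0
        · have hVp : V p = ∅ := by
            by_cases hk : p.2 < (t p.1).toList.length
            · have hU : ¬ (U p.1).Nonempty := fun h => hp ⟨h, hk⟩
              simp only [hVdef]
              simp only [if_pos hk]
              rw [Set.not_nonempty_iff_eq_empty.1 hU, Set.empty_prod]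
            · simp only [hVdef]; rw [if_neg hk]
          rw [hVp]
          exact le_trans (iSup_le fun h => absurd h Set.not_nonempty_empty) zero_le
    _ = ∑' n : ℕ, ∑' k : ℕ, F (n, k) := ENNReal.tsum_prod'
    _ ≤ ∑' n : ℕ, (ENNReal.ofReal ((2:ℝ) ^ (s+d)) *
          ((⨆ _ : (U n).Nonempty, EMetric.diam (U n) ^ s) +
            ENNReal.ofReal (e * (1/2) ^ (n+1)))) := ENNReal.tsum_le_tsum hGn
    _ = ENNReal.ofReal ((2:ℝ) ^ (s+d)) *
          ((∑' n, ⨆ _ : (U n).Nonempty, EMetric.diam (U n) ^ s) +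
            (∑' n, ENNReal.ofReal (e * (1/2) ^ (n+1)))) := by
        rw [ENNReal.tsum_mul_left, ENNReal.tsum_add]
    _ ≤ ENNReal.ofReal ((2:ℝ) ^ (s+d)) * (ENNReal.ofReal e + ENNReal.ofReal e) := by
        apply mul_le_mul_right
        rw [hgeo]
        exact add_le_add_left hUsum.le _
    _ = ENNReal.ofReal ((2:ℝ) ^ (s+d) * (e + e)) := by
        rw [← ENNReal.ofReal_add he.le he.le, ← ENNReal.ofReal_mul (by positivity)]
    _ ≤ (ε : ℝ≥0∞) := by
        rw [← ENNReal.ofReal_coe_nnreal]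
        apply ENNReal.ofReal_le_ofReal
        have h1 : e ≤ (ε : ℝ) / (2 * (2:ℝ) ^ (s + d)) := min_le_right _ _
        rw [le_div_iff₀ (by positivity)] at h1
        nlinarith [Real.rpow_pos_of_pos (by norm_num : (0:ℝ) < 2) (s+d), he]


lemma main_prod {X : Type*} [MetricSpace X] (E : Set X) (I : Set ℝ) (hI : IsCompact I) :
    dimH (E ×ˢ I) ≤ dimH E + ENNReal.ofReal (upperBoxDim I) := by
  borelize X
  rcases I.eq_empty_or_nonempty with rfl | hne
  · rw [Set.prod_empty, dimH_empty]; exact zero_le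
  apply dimH_le
  intro d' hd'
  by_contra hcon
  push_neg at hcon
  have hEne : dimH E ≠ ⊤ := by
    intro h
    rw [h, top_add] at hcon
    exact (not_top_lt hcon)
  set L := upperBoxDim I with hL
  set A := (dimH E).toReal with hA
  set M := max L 0 with hM
  have hM0 : 0 ≤ M := le_max_right _ _
  have hA0 : 0 ≤ A := ENNReal.toReal_nonneg
  have hofL : ENNReal.ofReal L = ENNReal.ofReal M := by
    rcases le_or_gt 0 L with h | h
    · rw [hM, max_eq_left h]
    · rw [hM, max_eq_right h.le, ENNReal.ofReal_eq_zero.2 h.le, ENNReal.ofReal_zero]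
  have htR : A + M < (d' : ℝ) := by
    have h1 := ENNReal.toReal_strict_mono ENNReal.coe_ne_top hcon
    rw [ENNReal.toReal_add hEne ENNReal.ofReal_ne_top, hofL,
      ENNReal.toReal_ofReal hM0, ENNReal.coe_toReal] at h1
    exact h1
  set ε := ((d' : ℝ) - A - M)/2 with hεdef
  have hε : 0 < ε := by simp only [hεdef]; linarith
  set s := A + ε with hsdef
  set dd := M + ε with hdddef
  have hs : 0 < s := by simp only [hsdef]; linarith
  have hdd : 0 < dd := by simp only [hdddef]; linarith
  have hsd : s + dd = (d' : ℝ) := by simp only [hsdef, hdddef, hεdef]; ring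
  have hdimE : dimH E < ENNReal.ofReal s := by
    have h1 : dimH E = ENNReal.ofReal A := (ENNReal.ofReal_toReal hEne).symm
    rw [h1]
    exact (ENNReal.ofReal_lt_ofReal_iff hs).2 (by linarith)
  have hdI : upperBoxDim I < dd := by
    have h1 : L ≤ M := le_max_left _ _
    simp only [← hL]
    linarith
  have h0 := key E I hI hne hs hdd hdimE hdI
  rw [hsd] at h0
  rw [hd'] at h0
  exact ENNReal.top_ne_zero h0


/-- For `E` in a metric space and a compact `I ⊆ ℝ` with upper box-counting
dimension `D(I)`, one has `HD(E × I) ≤ HD(E) + D(I)` (product with the max metric).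
In particular, for a nondegenerate compact interval, `HD(E × [a,b]) ≤ HD(E) + 1`. -/
theorem stmt8 {X : Type*} [MetricSpace X] (E : Set X) (I : Set ℝ) (hI : IsCompact I) :
    dimH (E ×ˢ I) ≤ dimH E + ENNReal.ofReal (upperBoxDim I) ∧
      ∀ a b : ℝ, a < b → dimH (E ×ˢ Set.Icc a b) ≤ dimH E + 1 := by
  refine ⟨main_prod E I hI, fun a b hab => ?_⟩
  have h1 := main_prod E (Set.Icc a b) isCompact_Icc
  have h2 : ENNReal.ofReal (upperBoxDim (Set.Icc a b)) ≤ 1 := by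
    calc ENNReal.ofReal (upperBoxDim (Set.Icc a b)) ≤ ENNReal.ofReal 1 :=
          ENNReal.ofReal_le_ofReal (upperBoxDim_le_one (Metric.isBounded_Icc a b))
      _ = 1 := ENNReal.ofReal_one
  exact h1.trans (add_le_add_right h2 _)
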